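/- Let z₁, …, z_n be points in a Hilbert space and let G be their geometric median, i.e., a minimizer of z ↦ Σᵢ ‖z − zᵢ‖. Let Z' ⊆ {1,…,n} with |Z'| < n/2, set α = |Z'|/n and C_α = (2 − 2α)/(1 − 2α). Then ‖G‖² ≤ (C_α)²/(n − |Z'|) · Σ_{i ∉ Z'} ‖zᵢ‖². -/
import Mathlib


/-- Lemma 1 (geometric median robustness): if `G` is a geometric median of
`z₁, …, z_n` in a Hilbert space and `Z'` is a subset with `|Z'| < n/2`, then
`‖G‖² ≤ C_α²/(n - |Z'|) · Σ_{i ∉ Z'} ‖z i‖²` with `α = |Z'|/n`,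
`C_α = (2 - 2α)/(1 - 2α)`. -/
theorem stmt12 {E : Type*} [NormedAddCommGroup E] [InnerProductSpace ℝ E]
    [CompleteSpace E]
    (n : ℕ) (z : Fin n → E) (G : E)
    (hG : ∀ y, ∑ i, ‖G - z i‖ ≤ ∑ i, ‖y - z i‖)
    (Z' : Finset (Fin n)) (hZ' : 2 * Z'.card < n) :
    ‖G‖ ^ 2 ≤
      ((2 - 2 * ((Z'.card : ℝ) / n)) / (1 - 2 * ((Z'.card : ℝ) / n))) ^ 2
        / ((n : ℝ) - Z'.card) * ∑ i ∈ Z'ᶜ, ‖z i‖ ^ 2 := by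
  classical
  set k : ℝ := (Z'.card : ℝ) with hkdef
  have hcard : (Z'ᶜ.card : ℝ) = n - k := by
    have h := Finset.card_compl Z'
    simp only [Fintype.card_fin] at h
    have hle : Z'.card ≤ n := by omega
    rw [h, hkdef]
    push_cast [hle]
    ring
  have hn2k : (0:ℝ) < n - 2 * k := by
    have : (2 * Z'.card : ℝ) < n := by exact_mod_cast hZ'
    rw [hkdef]; push_cast at this ⊢; linarith
  have hnk : (0:ℝ) < n - k := by
    have hk0 : (0:ℝ) ≤ k := by rw [hkdef]; positivity
    linarith
  have hn : (0:ℝ) < n := by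
    have hk0 : (0:ℝ) ≤ k := by rw [hkdef]; positivity
    linarith
  -- step 1: plug y = 0
  have h0 : ∑ i, ‖G - z i‖ ≤ ∑ i, ‖z i‖ := by
    have := hG 0
    simpa using this
  set g : ℝ := ‖G‖ with hgdef
  set T : ℝ := ∑ i ∈ Z'ᶜ, ‖z i‖ with hTdef
  set S : ℝ := ∑ i ∈ Z'ᶜ, ‖z i‖ ^ 2 with hSdef
  have hT0 : 0 ≤ T := Finset.sum_nonneg fun i _ => norm_nonneg _
  have hg0 : 0 ≤ g := norm_nonneg _
  -- key inequality: (n - 2k) * g ≤ 2 * T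
  have key : ((n:ℝ) - 2 * k) * g ≤ 2 * T := by
    have hA : ∑ i ∈ Z', (‖z i‖ - g) ≤ ∑ i ∈ Z', ‖G - z i‖ := by
      apply Finset.sum_le_sum
      intro i _
      have := norm_sub_norm_le (z i) G
      rw [norm_sub_rev] at this
      linarith [this]
    have hB : ∑ i ∈ Z'ᶜ, (g - ‖z i‖) ≤ ∑ i ∈ Z'ᶜ, ‖G - z i‖ := by
      apply Finset.sum_le_sum
      intro i _
      exact norm_sub_norm_le G (z i)
    have hsplit1 : ∑ i ∈ Z', ‖G - z i‖ + ∑ i ∈ Z'ᶜ, ‖G - z i‖ = ∑ i, ‖G - z i‖ :=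
      Finset.sum_add_sum_compl Z' _
    have hsplit2 : ∑ i ∈ Z', ‖z i‖ + ∑ i ∈ Z'ᶜ, ‖z i‖ = ∑ i, ‖z i‖ :=
      Finset.sum_add_sum_compl Z' _
    have hA' : ∑ i ∈ Z', (‖z i‖ - g) = (∑ i ∈ Z', ‖z i‖) - k * g := by
      rw [Finset.sum_sub_distrib, Finset.sum_const, hkdef, nsmul_eq_mul]
    have hB' : ∑ i ∈ Z'ᶜ, (g - ‖z i‖) = ((n:ℝ) - k) * g - T := by
      rw [Finset.sum_sub_distrib, Finset.sum_const, nsmul_eq_mul, hcard, hTdef]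
    nlinarith [hA, hB, hsplit1, hsplit2, h0, hA', hB']
  -- Cauchy-Schwarz
  have hCS : T ^ 2 ≤ ((n:ℝ) - k) * S := by
    have := sq_sum_le_card_mul_sum_sq (s := Z'ᶜ) (f := fun i => ‖z i‖)
    rw [← hTdef] at this
    calc T ^ 2 ≤ (Z'ᶜ.card : ℝ) * ∑ i ∈ Z'ᶜ, ‖z i‖ ^ 2 := by exact_mod_cast this
      _ = ((n:ℝ) - k) * S := by rw [hcard, hSdef]
  have hS0 : 0 ≤ S := Finset.sum_nonneg fun i _ => by positivity
  -- rewrite coefficient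
  have hcoef : ((2 - 2 * (k / n)) / (1 - 2 * (k / n))) ^ 2 / ((n:ℝ) - k)
      = 4 * ((n:ℝ) - k) / ((n:ℝ) - 2 * k) ^ 2 := by
    have h1 : (1 : ℝ) - 2 * (k / n) = ((n:ℝ) - 2 * k) / n := by field_simp
    have h2 : (2 : ℝ) - 2 * (k / n) = (2 * (n:ℝ) - 2 * k) / n := by field_simp
    rw [h1, h2]
    field_simp
    ring
  rw [hcoef, div_mul_eq_mul_div, le_div_iff₀ (by positivity)]
  nlinarith [key, hCS, mul_le_mul key key (by positivity) (by linarith), sq_nonneg ((n:ℝ) - 2*k)]
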